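/- arXiv:2511.10513 — 5 statements merged into one kernel-verified Lean document; each statement's English description precedes it below -/
import Mathlib

section
/- Let W be a left Kan extendable full subcategory of a category C with density comonad (T, ε, δ), and let J : W ⥤ C be the inclusion functor. Then an object C₀ of C admits a T-coalgebra structure (i.e., C₀ is W-generated) if and only if there exists a category K and a functor F : K ⥤ W such that C₀ is isomorphic to the colimit of J ∘ F. -/
open CategoryTheory CategoryTheory.Limits

universe v₁ v₂ u₁ u₂

/-- Let `W` be a left Kan extendable full subcategory of `C` with
inclusion `J : W ⥤ C`: the comonad `T` together with `η : J ⟶ J ⋙ T` is a pointwise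
left Kan extension of `J` along itself, the counit `ε` and comultiplication `δ` of `T`
satisfy `(εJ) ∘ η = 1_J` and `(δJ) ∘ η = (Tη) ∘ η`, and the density comonad `T` is
idempotent (`δ` is an isomorphism).  Then an object `C₀` of `C` admits a `T`-coalgebra
structure (i.e. `C₀` is `W`-generated) if and only if there are a category `K` and a
functor `F : K ⥤ W` such that `C₀` is isomorphic to the colimit of `J ∘ F`. -/
theorem wGenerated_iff_colimit_of_diagram_in_W
    {W : Type u₁} [Category.{v₁} W] {C : Type u₂} [Category.{v₂} C]
    (J : W ⥤ C) [J.Full] [J.Faithful]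
    (T : Comonad C) (η : J ⟶ J ⋙ (T : C ⥤ C))
    (hkan : (Functor.LeftExtension.mk (T : C ⥤ C) η).IsPointwiseLeftKanExtension)
    (hε : ∀ w : W, η.app w ≫ T.ε.app (J.obj w) = 𝟙 (J.obj w))
    (hδ : ∀ w : W, η.app w ≫ T.δ.app (J.obj w) = η.app w ≫ (T : C ⥤ C).map (η.app w))
    (hidem : IsIso T.δ) (C₀ : C) :
    (∃ a : C₀ ⟶ (T : C ⥤ C).obj C₀,
        a ≫ T.ε.app C₀ = 𝟙 C₀ ∧ a ≫ T.δ.app C₀ = a ≫ (T : C ⥤ C).map a) ↔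
    ∃ (K : Type (max u₁ u₂ v₁ v₂)) (_ : Category.{max u₁ u₂ v₁ v₂} K) (F : K ⥤ W)
      (_ : HasColimit (F ⋙ J)), Nonempty (colimit (F ⋙ J) ≅ C₀) := by
  constructor
  · rintro ⟨a, ha1, ha2⟩
    -- For an idempotent comonad, `T.map (ε.app X) = ε.app (T.obj X)`.
    have hTε : ∀ X : C, (T : C ⥤ C).map (T.ε.app X) = T.ε.app ((T : C ⥤ C).obj X) := by
      intro X
      haveI : IsIso (T.δ.app X) := inferInstance
      rw [← cancel_epi (T.δ.app X), T.right_counit, T.left_counit]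
    -- `a` is an isomorphism with inverse `ε.app C₀`.
    have hεa : T.ε.app C₀ ≫ a = 𝟙 _ := by
      have hnat : T.ε.app C₀ ≫ a = (T : C ⥤ C).map a ≫ T.ε.app ((T : C ⥤ C).obj C₀) :=
        (T.ε.naturality a).symm
      rw [hnat, ← hTε, ← Functor.map_comp, ha1]
      simp
    haveI : IsIso a := ⟨T.ε.app C₀, ha1, hεa⟩
    -- `T.obj C₀` is the colimit of the canonical diagram.
    set G := CostructuredArrow.proj J C₀ ⋙ J with hG
    haveI hGc : HasColimit G := ⟨⟨⟨_, hkan C₀⟩⟩⟩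
    haveI : (AsSmall.down :
        AsSmall.{max u₁ u₂ v₁ v₂} (CostructuredArrow J C₀) ⥤ CostructuredArrow J C₀).IsEquivalence :=
      (AsSmall.equiv (C := CostructuredArrow J C₀)).isEquivalence_inverse
    haveI : HasColimit ((AsSmall.down :
        AsSmall.{max u₁ u₂ v₁ v₂} (CostructuredArrow J C₀) ⥤ CostructuredArrow J C₀) ⋙ G) :=
      inferInstance
    refine ⟨AsSmall.{max u₁ u₂ v₁ v₂} (CostructuredArrow J C₀), inferInstance,
      AsSmall.down ⋙ CostructuredArrow.proj J C₀, ?_, ?_⟩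
    · exact inferInstanceAs (HasColimit (AsSmall.down ⋙ G))
    · refine ⟨?_⟩
      have e1 : colimit ((AsSmall.down :
          AsSmall.{max u₁ u₂ v₁ v₂} (CostructuredArrow J C₀) ⥤ CostructuredArrow J C₀) ⋙ G) ≅
          colimit G := Functor.Final.colimitIso _ _
      have e2 : colimit G ≅ (T : C ⥤ C).obj C₀ := colimit.isoColimitCocone ⟨_, hkan C₀⟩
      exact e1 ≪≫ e2 ≪≫ (asIso a).symm
  · rintro ⟨K, _, F, hc, ⟨φ⟩⟩
    -- Build the coalgebra structure from the colimit presentation.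
    let s : Cocone (F ⋙ J) :=
      { pt := (T : C ⥤ C).obj C₀
        ι :=
          { app := fun k => η.app (F.obj k) ≫
              (T : C ⥤ C).map (colimit.ι (F ⋙ J) k ≫ φ.hom)
            naturality := fun k k' f => by
              have hη : (F ⋙ J).map f ≫ η.app (F.obj k') =
                  η.app (F.obj k) ≫ (T : C ⥤ C).map ((F ⋙ J).map f) := η.naturality (F.map f)
              simp only [Functor.comp_obj, Functor.const_obj_obj, Functor.const_obj_map,
                Category.comp_id]
              rw [← Category.assoc, hη, Category.assoc, ← Functor.map_comp,
                colimit.w_assoc (F ⋙ J) f φ.hom] } }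
    obtain ⟨a, ha⟩ : ∃ a : C₀ ⟶ (T : C ⥤ C).obj C₀, ∀ k,
        colimit.ι (F ⋙ J) k ≫ φ.hom ≫ a =
          η.app (F.obj k) ≫ (T : C ⥤ C).map (colimit.ι (F ⋙ J) k ≫ φ.hom) := by
      refine ⟨φ.inv ≫ colimit.desc (F ⋙ J) s, fun k => ?_⟩
      rw [Iso.hom_inv_id_assoc]
      simp [s]
    refine ⟨a, ?_, ?_⟩
    · rw [← cancel_epi φ.hom, Category.comp_id]
      apply colimit.hom_ext
      intro k
      rw [reassoc_of% (ha k), T.ε.naturality, ← Category.assoc, hε (F.obj k)]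
      simp
    · rw [← cancel_epi φ.hom]
      apply colimit.hom_ext
      intro k
      have hδnat : (T : C ⥤ C).map (colimit.ι (F ⋙ J) k ≫ φ.hom) ≫ T.δ.app C₀ =
          T.δ.app (J.obj (F.obj k)) ≫
            (T : C ⥤ C).map ((T : C ⥤ C).map (colimit.ι (F ⋙ J) k ≫ φ.hom)) :=
        T.δ.naturality _
      have e1 : colimit.ι (F ⋙ J) k ≫ φ.hom ≫ a ≫ T.δ.app C₀ =
          η.app (F.obj k) ≫ (T : C ⥤ C).map (η.app (F.obj k)) ≫
            (T : C ⥤ C).map ((T : C ⥤ C).map (colimit.ι (F ⋙ J) k ≫ φ.hom)) := by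
        rw [show colimit.ι (F ⋙ J) k ≫ φ.hom ≫ a ≫ T.δ.app C₀ =
          (colimit.ι (F ⋙ J) k ≫ φ.hom ≫ a) ≫ T.δ.app C₀ by simp]
        rw [ha k, Category.assoc, hδnat, ← Category.assoc, hδ (F.obj k), Category.assoc]
      have e2 : colimit.ι (F ⋙ J) k ≫ φ.hom ≫ a ≫ (T : C ⥤ C).map a =
          η.app (F.obj k) ≫ (T : C ⥤ C).map (η.app (F.obj k)) ≫
            (T : C ⥤ C).map ((T : C ⥤ C).map (colimit.ι (F ⋙ J) k ≫ φ.hom)) := by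
        rw [show colimit.ι (F ⋙ J) k ≫ φ.hom ≫ a ≫ (T : C ⥤ C).map a =
          (colimit.ι (F ⋙ J) k ≫ φ.hom ≫ a) ≫ (T : C ⥤ C).map a by simp]
        rw [ha k, Category.assoc, ← Functor.map_comp,
          Category.assoc (colimit.ι (F ⋙ J) k) φ.hom a, ha k, Functor.map_comp]
      exact e1.trans e2.symm
end

section
/- Let W be a left Kan extendable full subcategory of a bicomplete category C. Assume that (1) every object of W is exponentiable in C, and (2) for all V, W′ ∈ W, the product V ×_C W′ is W-generated. Then for every V ∈ W and every W-generated object Y, the product V ×_C Y is W-generated; consequently the product of V and Y in the category W_l[C] of W-generated objects exists and coincides with V ×_C Y. -/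
open CategoryTheory CategoryTheory.Limits

universe v₁ v₂ u₁ u₂

/-- An object `X` of `C` is `W`-generated (relative to the density comonad `T`) if it
admits a `T`-coalgebra structure. -/
def WGen {C : Type u₂} [Category.{v₂} C] (T : Comonad C) (X : C) : Prop :=
  ∃ a : X ⟶ (T : C ⥤ C).obj X,
    a ≫ T.ε.app X = 𝟙 X ∧ a ≫ T.δ.app X = a ≫ (T : C ⥤ C).map a

/-- For an idempotent comonad, any section of the counit yields a coalgebra structure. -/
lemma wGen_of_section {C : Type u₂} [Category.{v₂} C] (T : Comonad C) [IsIso T.δ] {X : C}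
    (s : X ⟶ (T : C ⥤ C).obj X) (hs : s ≫ T.ε.app X = 𝟙 X) : WGen T X := by
  haveI : IsSplitEpi (T.ε.app X) := ⟨⟨⟨s, hs⟩⟩⟩
  haveI : IsIso (T.ε.app X) := (T.isSplitEpi_iff_isIso_counit X).mp inferInstance
  refine ⟨inv (T.ε.app X), by simp, ?_⟩
  haveI : IsIso (T.ε.app ((T : C ⥤ C).obj X)) := by
    haveI : IsSplitEpi (T.ε.app ((T : C ⥤ C).obj X)) := ⟨⟨⟨T.δ.app X, T.left_counit X⟩⟩⟩
    exact (T.isSplitEpi_iff_isIso_counit _).mp inferInstance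
  haveI : IsIso ((T : C ⥤ C).map (T.ε.app X)) := by
    rw [T.map_counit_app]; infer_instance
  rw [← cancel_mono ((T : C ⥤ C).map (T.ε.app X))]
  simp [← Functor.map_comp]

/-- For an idempotent comonad, the counit is an isomorphism at every coalgebra. -/
lemma isIso_counit_of_wGen {C : Type u₂} [Category.{v₂} C] (T : Comonad C) [IsIso T.δ] {X : C}
    (h : WGen T X) : IsIso (T.ε.app X) := by
  obtain ⟨a, ha, -⟩ := h
  haveI : IsSplitEpi (T.ε.app X) := ⟨⟨⟨a, ha⟩⟩⟩
  exact (T.isSplitEpi_iff_isIso_counit X).mp inferInstance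

/-- Let `W` be a left Kan extendable full subcategory of a bicomplete
category `C` (the inclusion `J` has a pointwise left Kan extension `(T, η)` along
itself whose density comonad is idempotent).  Assume that (1) every object of `W` is
exponentiable in `C` (the functor `- × J V` has a right adjoint), and (2) for all
`V, V' ∈ W` the product `J V ⨯ J V'` is `W`-generated.  Then for every `V ∈ W` and
every `W`-generated object `Y₀`, the product `J V ⨯ Y₀` is `W`-generated; consequently
the product of `V` and `Y₀` in the full subcategory `W_l[C]` of `W`-generated objects
exists and coincides with `J V ⨯ Y₀`: the binary fan in `W_l[C]` formed by the two
projections is a limit fan. -/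
theorem prod_wGenerated_of_exponentiable
    {W : Type u₁} [Category.{v₁} W] {C : Type u₂} [Category.{v₂} C]
    [HasLimits C] [HasColimits C]
    (J : W ⥤ C) [J.Full] [J.Faithful]
    (T : Comonad C) (η : J ⟶ J ⋙ (T : C ⥤ C))
    (hkan : (Functor.LeftExtension.mk (T : C ⥤ C) η).IsPointwiseLeftKanExtension)
    (hε : ∀ w : W, η.app w ≫ T.ε.app (J.obj w) = 𝟙 (J.obj w))
    (hδ : ∀ w : W, η.app w ≫ T.δ.app (J.obj w) = η.app w ≫ (T : C ⥤ C).map (η.app w))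
    (hidem : IsIso T.δ)
    (hexp : ∀ V : W, (prod.functor.flip.obj (J.obj V)).IsLeftAdjoint)
    (hprod : ∀ V V' : W, WGen T (J.obj V ⨯ J.obj V'))
    (V : W) (Y₀ : C) (hY : WGen T Y₀) :
    WGen T (J.obj V ⨯ Y₀) ∧
    ∃ (hV : WGen T (J.obj V)) (hP : WGen T (J.obj V ⨯ Y₀)),
      Nonempty (IsLimit (BinaryFan.mk
        (P := (⟨J.obj V ⨯ Y₀, hP⟩ : ObjectProperty.FullSubcategory (WGen T)))
        (show (⟨J.obj V ⨯ Y₀, hP⟩ : ObjectProperty.FullSubcategory (WGen T)) ⟶ ⟨J.obj V, hV⟩ from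
          ObjectProperty.homMk (prod.fst : J.obj V ⨯ Y₀ ⟶ J.obj V))
        (show (⟨J.obj V ⨯ Y₀, hP⟩ : ObjectProperty.FullSubcategory (WGen T)) ⟶ ⟨Y₀, hY⟩ from
          ObjectProperty.homMk (prod.snd : J.obj V ⨯ Y₀ ⟶ Y₀)))) := by
  haveI := hidem
  haveI := hexp V
  obtain ⟨a₀, ha₀, -⟩ := id hY
  set F : C ⥤ C := prod.functor.flip.obj (J.obj V) with hF
  -- the counit is iso on products of objects of `W`
  have hwV : ∀ w : W, IsIso (T.ε.app (J.obj w ⨯ J.obj V)) :=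
    fun w => isIso_counit_of_wGen T (hprod w V)
  haveI := hwV
  -- the comparison maps into `J V ⨯ Y₀`
  let m : ∀ f : CostructuredArrow J Y₀, (J.obj f.left ⨯ J.obj V) ⟶ (J.obj V ⨯ Y₀) :=
    fun f => prod.lift prod.snd (prod.fst ≫ f.hom)
  -- the cocone used to construct the coalgebra structure
  let k : Cocone ((CostructuredArrow.proj J Y₀ ⋙ J) ⋙ F) :=
    { pt := (T : C ⥤ C).obj (J.obj V ⨯ Y₀)
      ι :=
        { app := fun f =>
            inv (T.ε.app (J.obj f.left ⨯ J.obj V)) (I := hwV f.left) ≫ (T : C ⥤ C).map (m f)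
          naturality := by
            intro f g φ
            have hm : prod.map (J.map φ.left) (𝟙 (J.obj V)) ≫ m g = m f := by
              apply Limits.prod.hom_ext <;> simp [m, CostructuredArrow.w φ]
            have hnat : inv (T.ε.app (J.obj f.left ⨯ J.obj V)) ≫
                (T : C ⥤ C).map (prod.map (J.map φ.left) (𝟙 (J.obj V))) =
                prod.map (J.map φ.left) (𝟙 (J.obj V)) ≫
                  inv (T.ε.app (J.obj g.left ⨯ J.obj V)) := by
              have hn := T.ε.naturality (prod.map (J.map φ.left) (𝟙 (J.obj V)))
              dsimp at hn
              rw [IsIso.inv_comp_eq, ← Category.assoc, ← hn, Category.assoc,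
                IsIso.hom_inv_id, Category.comp_id]
            show prod.map (J.map φ.left) (𝟙 (J.obj V)) ≫
                (inv (T.ε.app (J.obj g.left ⨯ J.obj V)) ≫ (T : C ⥤ C).map (m g)) =
                (inv (T.ε.app (J.obj f.left ⨯ J.obj V)) ≫ (T : C ⥤ C).map (m f)) ≫
                  𝟙 ((T : C ⥤ C).obj (J.obj V ⨯ Y₀))
            rw [Category.comp_id, ← hm, Functor.map_comp, ← Category.assoc, ← hnat,
              Category.assoc] } }
  -- the colimit obtained by applying `- ⨯ J V` to the canonical colimit for `Y₀`
  have hc : IsColimit (F.mapCocone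
      ((Functor.LeftExtension.mk (T : C ⥤ C) η).coconeAt Y₀)) :=
    isColimitOfPreserves F (hkan Y₀)
  let t : ((T : C ⥤ C).obj Y₀ ⨯ J.obj V) ⟶ (T : C ⥤ C).obj (J.obj V ⨯ Y₀) := hc.desc k
  -- `t` composed with the counit
  have htε : t ≫ T.ε.app (J.obj V ⨯ Y₀) =
      prod.lift prod.snd (prod.fst ≫ T.ε.app Y₀) := by
    apply hc.hom_ext
    intro f
    erw [← Category.assoc, hc.fac k f]
    show (inv (T.ε.app (J.obj f.left ⨯ J.obj V)) ≫ (T : C ⥤ C).map (m f)) ≫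
        T.ε.app (J.obj V ⨯ Y₀) =
      prod.map (η.app f.left ≫ (T : C ⥤ C).map f.hom) (𝟙 (J.obj V)) ≫
        prod.lift prod.snd (prod.fst ≫ T.ε.app Y₀)
    have h1 : (T : C ⥤ C).map (m f) ≫ T.ε.app (J.obj V ⨯ Y₀) =
        T.ε.app (J.obj f.left ⨯ J.obj V) ≫ m f := by
      simpa using T.ε.naturality (m f)
    rw [Category.assoc, h1, IsIso.inv_hom_id_assoc]
    have h2 : (T : C ⥤ C).map f.hom ≫ T.ε.app Y₀ = T.ε.app (J.obj f.left) ≫ f.hom := by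
      simpa using T.ε.naturality f.hom
    apply Limits.prod.hom_ext
    · simp [m, prod.lift_fst]
    · simp [m, h2, reassoc_of% (hε f.left)]
  -- the section of the counit at `J V ⨯ Y₀`
  let s : (J.obj V ⨯ Y₀) ⟶ (T : C ⥤ C).obj (J.obj V ⨯ Y₀) :=
    prod.lift (prod.snd ≫ a₀) prod.fst ≫ t
  have hs : s ≫ T.ε.app (J.obj V ⨯ Y₀) = 𝟙 (J.obj V ⨯ Y₀) := by
    rw [show s ≫ T.ε.app (J.obj V ⨯ Y₀) =
        prod.lift (prod.snd ≫ a₀) prod.fst ≫ (t ≫ T.ε.app (J.obj V ⨯ Y₀)) from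
      Category.assoc _ _ _, htε]
    apply Limits.prod.hom_ext <;> simp [ha₀, prod.lift_fst, prod.lift_snd, prod.lift_fst_assoc]
  have hP : WGen T (J.obj V ⨯ Y₀) := wGen_of_section T s hs
  have hV : WGen T (J.obj V) := wGen_of_section T (η.app V) (hε V)
  refine ⟨hP, hV, hP, ⟨?_⟩⟩
  exact BinaryFan.isLimitMk
    (fun c => ObjectProperty.homMk (prod.lift (c.fst.hom : c.pt.obj ⟶ J.obj V) (c.snd.hom : c.pt.obj ⟶ Y₀) : c.pt.obj ⟶ J.obj V ⨯ Y₀))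
    (fun c => ObjectProperty.hom_ext _ (prod.lift_fst _ _))
    (fun c => ObjectProperty.hom_ext _ (prod.lift_snd _ _))
    (fun c μ h1 h2 => by
      apply ObjectProperty.hom_ext
      change μ.hom = prod.lift (c.fst.hom : c.pt.obj ⟶ J.obj V) (c.snd.hom : c.pt.obj ⟶ Y₀)
      apply Limits.prod.hom_ext
      · exact (congrArg (fun g => g.hom) h1).trans (prod.lift_fst (X := J.obj V) (Y := Y₀) _ _).symm
      · exact (congrArg (fun g => g.hom) h2).trans (prod.lift_snd (X := J.obj V) (Y := Y₀) _ _).symm)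
end

section
/- Let W be a left Kan extendable full subcategory of a bicomplete category C which is closeable, i.e.: (1) every object of W is exponentiable in C; (2) for all V, W′ ∈ W, the product V ×_C W′ is W-generated; (3) for all W-generated objects X and Y, the cone θ : J_X ×_C Y ⇒ X ×_{W_l[C]} Y, whose component at (σ : V → X) ∈ W/X is the morphism σ ×_{W_l[C]} 1_Y : V ×_C Y → X ×_{W_l[C]} Y, is a colimiting cone in C; (4) for all W-generated objects Y and Z, the functor S^Y_Z : (W/Y)^op ⥤ C sending (σ : V → Y) to the exponential object Hom(V, Z) has a limit in C. Then the category W_l[C] of W-generated objects is cartesian closed, with internal hom of Y and Z given by applying the coreflector C ⥤ W_l[C] to the limit of S^Y_Z. -/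
open CategoryTheory CategoryTheory.Limits

universe v₁ v₂ u₁ u₂

open MonoidalCategory

section

section WgAux

variable {C : Type u₂} [Category.{v₂} C] (T : Comonad C)

theorem wg_epsT_isIso (hidem : IsIso T.δ) (X : C) :
    IsIso (T.ε.app ((T : C ⥤ C).obj X)) := by
  haveI := hidem
  have h := IsIso.inv_eq_of_hom_inv_id (T.left_counit X)
  rw [← h]; infer_instance

theorem wg_Teps_eq (hidem : IsIso T.δ) (X : C) :
    (T : C ⥤ C).map (T.ε.app X) = T.ε.app ((T : C ⥤ C).obj X) := by
  haveI := hidem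
  rw [← cancel_epi (T.δ.app X), T.right_counit, T.left_counit]

theorem wg_isIso_eps (hidem : IsIso T.δ) {X : C} (h : WGen T X) :
    IsIso (T.ε.app X) := by
  obtain ⟨a, ha, -⟩ := h
  haveI := wg_epsT_isIso T hidem X
  haveI : IsIso ((T : C ⥤ C).map (T.ε.app X)) := by
    rw [wg_Teps_eq T hidem]; infer_instance
  have hTa : (T : C ⥤ C).map a = T.δ.app X := by
    rw [← cancel_mono ((T : C ⥤ C).map (T.ε.app X)), ← Functor.map_comp, ha,
      CategoryTheory.Functor.map_id, T.right_counit]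
  refine ⟨a, ?_, ha⟩
  have hnat := T.ε.naturality a
  simp only [Functor.id_map] at hnat
  rw [← hnat, hTa, T.left_counit]

theorem wg_gen_T (X : C) : WGen T ((T : C ⥤ C).obj X) :=
  ⟨T.δ.app X, T.left_counit X, (T.coassoc X).symm⟩

noncomputable def wgLift (hidem : IsIso T.δ) {A X : C} (hA : WGen T A) (f : A ⟶ X) :
    A ⟶ (T : C ⥤ C).obj X :=
  haveI := wg_isIso_eps T hidem hA
  inv (T.ε.app A) ≫ (T : C ⥤ C).map f

theorem wgLift_eps (hidem : IsIso T.δ) {A X : C} (hA : WGen T A) (f : A ⟶ X) :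
    wgLift T hidem hA f ≫ T.ε.app X = f := by
  haveI := wg_isIso_eps T hidem hA
  have hnat := T.ε.naturality f
  simp only [Functor.id_map] at hnat
  rw [wgLift, Category.assoc, hnat, IsIso.inv_hom_id_assoc]

theorem wg_hom_ext (hidem : IsIso T.δ) {A X : C} (hA : WGen T A)
    {g g' : A ⟶ (T : C ⥤ C).obj X}
    (h : g ≫ T.ε.app X = g' ≫ T.ε.app X) : g = g' := by
  haveI := wg_isIso_eps T hidem hA
  have key : ∀ u : A ⟶ (T : C ⥤ C).obj X,
      u = inv (T.ε.app A) ≫ (T : C ⥤ C).map (u ≫ T.ε.app X) := by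
    intro u
    have hnat := T.ε.naturality u
    simp only [Functor.id_map] at hnat
    rw [Functor.map_comp, wg_Teps_eq T hidem, hnat, IsIso.inv_hom_id_assoc]
  calc g = inv (T.ε.app A) ≫ (T : C ⥤ C).map (g ≫ T.ε.app X) := key g
    _ = inv (T.ε.app A) ≫ (T : C ⥤ C).map (g' ≫ T.ε.app X) := by rw [h]
    _ = g' := (key g').symm

variable [HasLimits C]

noncomputable def wgCFP (hidem : IsIso T.δ) :
    CartesianMonoidalCategory (ObjectProperty.FullSubcategory (WGen T)) :=
  CartesianMonoidalCategory.ofChosenFiniteProducts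
    { cone := asEmptyCone ⟨(T : C ⥤ C).obj (⊤_ C), wg_gen_T T _⟩
      isLimit := IsTerminal.ofUniqueHom
        (fun A => ObjectProperty.homMk (show A.obj ⟶ (T : C ⥤ C).obj (⊤_ C) from
          wgLift T hidem A.property (terminal.from A.obj)))
        (fun A m => by
          apply ObjectProperty.hom_ext
          apply wg_hom_ext T hidem A.property
          rw [ObjectProperty.homMk_hom, wgLift_eps]
          exact Subsingleton.elim (α := A.obj ⟶ ⊤_ C) _ _) }
    (fun X Y =>
      { cone := BinaryFan.mk
          (P := ⟨(T : C ⥤ C).obj (X.obj ⨯ Y.obj), wg_gen_T T _⟩)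
          (ObjectProperty.homMk (show (T : C ⥤ C).obj (X.obj ⨯ Y.obj) ⟶ X.obj from T.ε.app _ ≫ prod.fst))
          (ObjectProperty.homMk (show (T : C ⥤ C).obj (X.obj ⨯ Y.obj) ⟶ Y.obj from T.ε.app _ ≫ prod.snd))
        isLimit := BinaryFan.isLimitMk
          (fun s => ObjectProperty.homMk (show s.pt.obj ⟶ (T : C ⥤ C).obj (X.obj ⨯ Y.obj) from
            wgLift T hidem s.pt.property (prod.lift s.fst.hom s.snd.hom)))
          (fun s => by
            apply ObjectProperty.hom_ext
            show wgLift T hidem s.pt.property (prod.lift s.fst.hom s.snd.hom) ≫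
              (T.ε.app _ ≫ prod.fst) = s.fst.hom
            rw [← Category.assoc, wgLift_eps, prod.lift_fst])
          (fun s => by
            apply ObjectProperty.hom_ext
            show wgLift T hidem s.pt.property (prod.lift s.fst.hom s.snd.hom) ≫
              (T.ε.app _ ≫ prod.snd) = s.snd.hom
            rw [← Category.assoc, wgLift_eps, prod.lift_snd])
          (fun s m h1 h2 => by
            apply ObjectProperty.hom_ext
            apply wg_hom_ext T hidem s.pt.property
            rw [ObjectProperty.homMk_hom, wgLift_eps]
            apply Limits.prod.hom_ext
            · rw [Category.assoc]; exact (congrArg (fun f => f.hom) h1).trans (prod.lift_fst (s.fst.hom : s.pt.obj ⟶ X.obj) (s.snd.hom : s.pt.obj ⟶ Y.obj)).symm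
            · rw [Category.assoc]; exact (congrArg (fun f => f.hom) h2).trans (prod.lift_snd (s.fst.hom : s.pt.obj ⟶ X.obj) (s.snd.hom : s.pt.obj ⟶ Y.obj)).symm) })

end WgAux

section WgClosed

variable {W : Type u₁} [Category.{v₁} W] {C : Type u₂} [Category.{v₂} C]
  [HasLimits C] [HasColimits C]
  (J : W ⥤ C) (T : Comonad C) (hidem : IsIso T.δ)
  (E : W → C ⥤ C) (adjE : ∀ V : W, prod.functor.flip.obj (J.obj V) ⊣ E V)
  (hVY : ∀ (V : W) (Y : C), WGen T Y → WGen T (J.obj V ⨯ Y))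
  (hθ : ∀ (X Y : C) (hX : WGen T X) (hY : WGen T Y)
    (P : BinaryFan (⟨X, hX⟩ : ObjectProperty.FullSubcategory (WGen T)) ⟨Y, hY⟩) (hP : IsLimit P)
    (Z₀ : C) (c : ∀ σ : CostructuredArrow J X, (J.obj σ.left ⨯ Y) ⟶ Z₀),
    (∀ (σ σ' : CostructuredArrow J X) (m : σ ⟶ σ'),
      prod.map (J.map m.left) (𝟙 Y) ≫ c σ' = c σ) →
    ∃! h : P.pt.obj ⟶ Z₀, ∀ σ : CostructuredArrow J X,
      (ObjectProperty.ι (WGen T)).map (hP.lift (BinaryFan.mk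
        (show (⟨J.obj σ.left ⨯ Y, hVY σ.left Y hY⟩ : ObjectProperty.FullSubcategory (WGen T)) ⟶
            ⟨X, hX⟩ from ObjectProperty.homMk ((prod.fst : J.obj σ.left ⨯ Y ⟶ J.obj σ.left) ≫ σ.hom : J.obj σ.left ⨯ Y ⟶ X))
        (show (⟨J.obj σ.left ⨯ Y, hVY σ.left Y hY⟩ : ObjectProperty.FullSubcategory (WGen T)) ⟶
            ⟨Y, hY⟩ from ObjectProperty.homMk (prod.snd : J.obj σ.left ⨯ Y ⟶ Y)))) ≫ h = c σ)
  (hS : ∀ (Y Z : C), WGen T Y → WGen T Z →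
      ∃ (M : C) (π : ∀ σ : CostructuredArrow J Y, M ⟶ (E σ.left).obj Z),
        (∀ (σ σ' : CostructuredArrow J Y) (m : σ ⟶ σ'),
          π σ = π σ' ≫ ((adjE σ.left).homEquiv ((E σ'.left).obj Z) Z)
            (prod.map (𝟙 ((E σ'.left).obj Z)) (J.map m.left) ≫
              (adjE σ'.left).counit.app Z)) ∧
        (∀ (N : C) (ρ : ∀ σ : CostructuredArrow J Y, N ⟶ (E σ.left).obj Z),
          (∀ (σ σ' : CostructuredArrow J Y) (m : σ ⟶ σ'),
            ρ σ = ρ σ' ≫ ((adjE σ.left).homEquiv ((E σ'.left).obj Z) Z)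
              (prod.map (𝟙 ((E σ'.left).obj Z)) (J.map m.left) ≫
                (adjE σ'.left).counit.app Z)) →
          ∃! h : N ⟶ M, ∀ σ, h ≫ π σ = ρ σ))

/-- The chosen limit of `S^Y_Z`. -/
noncomputable def wgM (Y Z : C) (hY : WGen T Y) (hZ : WGen T Z) : C :=
  (hS Y Z hY hZ).choose

/-- The limit projections. -/
noncomputable def wgPi (Y Z : C) (hY : WGen T Y) (hZ : WGen T Z) :
    ∀ σ : CostructuredArrow J Y, wgM J T E adjE hS Y Z hY hZ ⟶ (E σ.left).obj Z :=
  (hS Y Z hY hZ).choose_spec.choose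

theorem wgPi_compat (Y Z : C) (hY : WGen T Y) (hZ : WGen T Z) :
    ∀ (σ σ' : CostructuredArrow J Y) (m : σ ⟶ σ'),
      wgPi J T E adjE hS Y Z hY hZ σ = wgPi J T E adjE hS Y Z hY hZ σ' ≫
        ((adjE σ.left).homEquiv ((E σ'.left).obj Z) Z)
          (prod.map (𝟙 ((E σ'.left).obj Z)) (J.map m.left) ≫ (adjE σ'.left).counit.app Z) :=
  (hS Y Z hY hZ).choose_spec.choose_spec.1

theorem wgM_univ (Y Z : C) (hY : WGen T Y) (hZ : WGen T Z) :
    ∀ (N : C) (ρ : ∀ σ : CostructuredArrow J Y, N ⟶ (E σ.left).obj Z),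
      (∀ (σ σ' : CostructuredArrow J Y) (m : σ ⟶ σ'),
        ρ σ = ρ σ' ≫ ((adjE σ.left).homEquiv ((E σ'.left).obj Z) Z)
          (prod.map (𝟙 ((E σ'.left).obj Z)) (J.map m.left) ≫ (adjE σ'.left).counit.app Z)) →
      ∃! h : N ⟶ wgM J T E adjE hS Y Z hY hZ, ∀ σ, h ≫ wgPi J T E adjE hS Y Z hY hZ σ = ρ σ :=
  (hS Y Z hY hZ).choose_spec.choose_spec.2

/-- The key transposition computation. -/
theorem wg_compat_step {X Y Z : C} (σ σ' : CostructuredArrow J Y) (m : σ ⟶ σ')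
    (c : ∀ τ : CostructuredArrow J Y, (J.obj τ.left ⨯ X) ⟶ Z) :
    (((adjE σ.left).homEquiv X Z) ((prod.braiding X (J.obj σ.left)).hom ≫ c σ) =
      ((adjE σ'.left).homEquiv X Z) ((prod.braiding X (J.obj σ'.left)).hom ≫ c σ') ≫
        ((adjE σ.left).homEquiv ((E σ'.left).obj Z) Z)
          (prod.map (𝟙 ((E σ'.left).obj Z)) (J.map m.left) ≫ (adjE σ'.left).counit.app Z))
      ↔ prod.map (J.map m.left) (𝟙 X) ≫ c σ' = c σ := by
  set u := J.map m.left with hu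
  set ρ' := ((adjE σ'.left).homEquiv X Z) ((prod.braiding X (J.obj σ'.left)).hom ≫ c σ') with hρ'
  have h1 : ρ' ≫ ((adjE σ.left).homEquiv ((E σ'.left).obj Z) Z)
        (prod.map (𝟙 ((E σ'.left).obj Z)) u ≫ (adjE σ'.left).counit.app Z)
      = ((adjE σ.left).homEquiv X Z)
        ((prod.functor.flip.obj (J.obj σ.left)).map ρ' ≫
          (prod.map (𝟙 ((E σ'.left).obj Z)) u ≫ (adjE σ'.left).counit.app Z)) := by
    rw [Adjunction.homEquiv_naturality_left]
  have h2 : (prod.functor.flip.obj (J.obj σ.left)).map ρ' ≫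
        (prod.map (𝟙 ((E σ'.left).obj Z)) u ≫ (adjE σ'.left).counit.app Z)
      = prod.map (𝟙 X) u ≫ ((prod.functor.flip.obj (J.obj σ'.left)).map ρ' ≫
          (adjE σ'.left).counit.app Z) := by
    have : (prod.functor.flip.obj (J.obj σ.left)).map ρ' = prod.map ρ' (𝟙 (J.obj σ.left)) := rfl
    have h' : (prod.functor.flip.obj (J.obj σ'.left)).map ρ' = prod.map ρ' (𝟙 (J.obj σ'.left)) := rfl
    rw [this, h']
    have key : prod.map ρ' (𝟙 (J.obj σ.left)) ≫ prod.map (𝟙 ((E σ'.left).obj Z)) u =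
        prod.map (𝟙 X) u ≫ prod.map ρ' (𝟙 (J.obj σ'.left)) := by
      rw [prod.map_map, prod.map_map]; simp
    exact (reassoc_of% key) ((adjE σ'.left).counit.app Z)
  have h3 : (prod.functor.flip.obj (J.obj σ'.left)).map ρ' ≫ (adjE σ'.left).counit.app Z
      = (prod.braiding X (J.obj σ'.left)).hom ≫ c σ' := by
    rw [show (prod.functor.flip.obj (J.obj σ'.left)).map ρ' ≫ (adjE σ'.left).counit.app Z
        = ((adjE σ'.left).homEquiv X Z).symm ρ' from (Adjunction.homEquiv_counit (adjE σ'.left) X Z ρ').symm,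
      hρ', Equiv.symm_apply_apply]
    rfl
  have h4 : prod.map (𝟙 X) u ≫ (prod.braiding X (J.obj σ'.left)).hom
      = (prod.braiding X (J.obj σ.left)).hom ≫ prod.map u (𝟙 X) :=
    braid_natural _ _
  have h5 : prod.map (𝟙 X) u ≫ ((prod.functor.flip.obj (J.obj σ'.left)).map ρ' ≫
      (adjE σ'.left).counit.app Z) =
      (prod.braiding X (J.obj σ.left)).hom ≫ prod.map u (𝟙 X) ≫ c σ' := by
    refine (congrArg (fun x => prod.map (𝟙 X) u ≫ x) h3).trans ?_
    exact (reassoc_of% h4) (c σ')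
  rw [h1, h2, h5]
  refine (Equiv.apply_eq_iff_eq _).trans ((cancel_epi (prod.braiding X (J.obj σ.left)).hom).trans ?_)
  exact eq_comm

variable [CartesianMonoidalCategory (ObjectProperty.FullSubcategory (WGen T))]

/-- The colimit injections into the chosen product in `W_l[C]`. -/
noncomputable def wgl (Y X : ObjectProperty.FullSubcategory (WGen T)) (σ : CostructuredArrow J Y.obj) :
    (⟨J.obj σ.left ⨯ X.obj, hVY σ.left X.obj X.2⟩ : ObjectProperty.FullSubcategory (WGen T)) ⟶ Y ⊗ X :=
  CartesianMonoidalCategory.lift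
    (show (⟨J.obj σ.left ⨯ X.obj, hVY σ.left X.obj X.2⟩ : ObjectProperty.FullSubcategory (WGen T)) ⟶ Y from
      ObjectProperty.homMk ((prod.fst : J.obj σ.left ⨯ X.obj ⟶ J.obj σ.left) ≫ σ.hom : J.obj σ.left ⨯ X.obj ⟶ Y.obj))
    (show (⟨J.obj σ.left ⨯ X.obj, hVY σ.left X.obj X.2⟩ : ObjectProperty.FullSubcategory (WGen T)) ⟶ X from
      ObjectProperty.homMk (prod.snd : J.obj σ.left ⨯ X.obj ⟶ X.obj))

/-- The family of maps `J V ⨯ X ⟶ Z` induced by a map out of the product. -/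
noncomputable def wgC (Y X Z : ObjectProperty.FullSubcategory (WGen T)) (g : Y ⊗ X ⟶ Z)
    (σ : CostructuredArrow J Y.obj) : (J.obj σ.left ⨯ X.obj) ⟶ Z.obj :=
  (ObjectProperty.ι (WGen T)).map (wgl J T hVY Y X σ ≫ g)

/-- The family of maps induced by a map out of the product commutes with whiskering. -/
theorem wgC_whisker (Y : ObjectProperty.FullSubcategory (WGen T)) {X' X Z : ObjectProperty.FullSubcategory (WGen T)}
    (f : X' ⟶ X) (g : Y ⊗ X ⟶ Z) (σ : CostructuredArrow J Y.obj) :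
    wgC J T hVY Y X' Z (Y ◁ f ≫ g) σ =
      prod.map (𝟙 (J.obj σ.left)) ((ObjectProperty.ι (WGen T)).map f) ≫
        wgC J T hVY Y X Z g σ := by
  have key : wgl J T hVY Y X' σ ≫ (Y ◁ f) =
      (show (⟨J.obj σ.left ⨯ X'.obj, hVY σ.left X'.obj X'.2⟩ : ObjectProperty.FullSubcategory (WGen T)) ⟶
          ⟨J.obj σ.left ⨯ X.obj, hVY σ.left X.obj X.2⟩ from
        ObjectProperty.homMk (prod.map (𝟙 (J.obj σ.left)) ((ObjectProperty.ι (WGen T)).map f))) ≫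
        wgl J T hVY Y X σ := by
    apply CartesianMonoidalCategory.hom_ext
    · simp only [Category.assoc, CartesianMonoidalCategory.whiskerLeft_fst, wgl,
        CartesianMonoidalCategory.lift_fst, CartesianMonoidalCategory.lift_fst_assoc]
      apply ObjectProperty.hom_ext
      show (prod.fst ≫ σ.hom : J.obj σ.left ⨯ X'.obj ⟶ Y.obj) =
        prod.map (𝟙 (J.obj σ.left)) ((ObjectProperty.ι (WGen T)).map f) ≫
          (prod.fst ≫ σ.hom)
      rw [← Category.assoc, prod.map_fst, Category.comp_id]
      rfl
    · simp only [Category.assoc, CartesianMonoidalCategory.whiskerLeft_snd, wgl,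
        CartesianMonoidalCategory.lift_snd, CartesianMonoidalCategory.lift_snd_assoc]
      apply ObjectProperty.hom_ext
      show (prod.snd : J.obj σ.left ⨯ X'.obj ⟶ X'.obj) ≫
          (ObjectProperty.ι (WGen T)).map f =
        prod.map (𝟙 (J.obj σ.left)) ((ObjectProperty.ι (WGen T)).map f) ≫ prod.snd
      rw [prod.map_snd]
      rfl
  show (ObjectProperty.ι (WGen T)).map (wgl J T hVY Y X' σ ≫ (Y ◁ f ≫ g)) = _
  rw [← Category.assoc, key, Category.assoc, Functor.map_comp]
  rfl

/-- The families induced by maps out of the product are compatible. -/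
theorem wgC_compat (Y X Z : ObjectProperty.FullSubcategory (WGen T)) (g : Y ⊗ X ⟶ Z)
    (σ σ' : CostructuredArrow J Y.obj) (m : σ ⟶ σ') :
    prod.map (J.map m.left) (𝟙 X.obj) ≫ wgC J T hVY Y X Z g σ' = wgC J T hVY Y X Z g σ := by
  have key : (show (⟨J.obj σ.left ⨯ X.obj, hVY σ.left X.obj X.2⟩ : ObjectProperty.FullSubcategory (WGen T)) ⟶
        ⟨J.obj σ'.left ⨯ X.obj, hVY σ'.left X.obj X.2⟩ from
      ObjectProperty.homMk (prod.map (J.map m.left) (𝟙 X.obj))) ≫ wgl J T hVY Y X σ' = wgl J T hVY Y X σ := by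
    apply CartesianMonoidalCategory.hom_ext
    · simp only [Category.assoc, wgl, CartesianMonoidalCategory.lift_fst]
      apply ObjectProperty.hom_ext
      show prod.map (J.map m.left) (𝟙 X.obj) ≫ (prod.fst ≫ σ'.hom) = prod.fst ≫ σ.hom
      rw [← Category.assoc, prod.map_fst, Category.assoc, CostructuredArrow.w m]
    · simp only [Category.assoc, wgl, CartesianMonoidalCategory.lift_snd]
      apply ObjectProperty.hom_ext
      show prod.map (J.map m.left) (𝟙 X.obj) ≫ prod.snd =
        (prod.snd : J.obj σ.left ⨯ X.obj ⟶ X.obj)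
      rw [prod.map_snd, Category.comp_id]
  calc prod.map (J.map m.left) (𝟙 X.obj) ≫ wgC J T hVY Y X Z g σ'
      = (ObjectProperty.ι (WGen T)).map
          ((show (⟨J.obj σ.left ⨯ X.obj, hVY σ.left X.obj X.2⟩ : ObjectProperty.FullSubcategory (WGen T)) ⟶
              ⟨J.obj σ'.left ⨯ X.obj, hVY σ'.left X.obj X.2⟩ from
            ObjectProperty.homMk (prod.map (J.map m.left) (𝟙 X.obj))) ≫ (wgl J T hVY Y X σ' ≫ g)) := rfl
    _ = wgC J T hVY Y X Z g σ := by rw [← Category.assoc, key]; rfl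

/-- The transposed family. -/
noncomputable def wgRho (Y X Z : ObjectProperty.FullSubcategory (WGen T)) (g : Y ⊗ X ⟶ Z)
    (σ : CostructuredArrow J Y.obj) : X.obj ⟶ (E σ.left).obj Z.obj :=
  ((adjE σ.left).homEquiv X.obj Z.obj)
    ((prod.braiding X.obj (J.obj σ.left)).hom ≫ wgC J T hVY Y X Z g σ)

theorem wgRho_compat (Y X Z : ObjectProperty.FullSubcategory (WGen T)) (g : Y ⊗ X ⟶ Z) :
    ∀ (σ σ' : CostructuredArrow J Y.obj) (m : σ ⟶ σ'),
      wgRho J T E adjE hVY Y X Z g σ = wgRho J T E adjE hVY Y X Z g σ' ≫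
        ((adjE σ.left).homEquiv ((E σ'.left).obj Z.obj) Z.obj)
          (prod.map (𝟙 ((E σ'.left).obj Z.obj)) (J.map m.left) ≫
            (adjE σ'.left).counit.app Z.obj) := fun σ σ' m =>
  (wg_compat_step J E adjE σ σ' m (wgC J T hVY Y X Z g)).mpr (wgC_compat J T hVY Y X Z g σ σ' m)

/-- The internal hom object. -/
noncomputable abbrev wgIhomObj (Y Z : ObjectProperty.FullSubcategory (WGen T)) : ObjectProperty.FullSubcategory (WGen T) :=
  ⟨(T : C ⥤ C).obj (wgM J T E adjE hS Y.obj Z.obj Y.2 Z.2), wg_gen_T T _⟩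

/-- Transposing a candidate internal-hom element to a family. -/
noncomputable def wgRhoT (Y X Z : ObjectProperty.FullSubcategory (WGen T))
    (t : X ⟶ wgIhomObj J T E adjE hS Y Z) (σ : CostructuredArrow J Y.obj) :
    X.obj ⟶ (E σ.left).obj Z.obj :=
  t.hom ≫
    (T.ε.app _ ≫ wgPi J T E adjE hS Y.obj Z.obj Y.2 Z.2 σ)

theorem wgRhoT_compat (Y X Z : ObjectProperty.FullSubcategory (WGen T))
    (t : X ⟶ wgIhomObj J T E adjE hS Y Z) :
    ∀ (σ σ' : CostructuredArrow J Y.obj) (m : σ ⟶ σ'),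
      wgRhoT J T E adjE hS Y X Z t σ = wgRhoT J T E adjE hS Y X Z t σ' ≫
        ((adjE σ.left).homEquiv ((E σ'.left).obj Z.obj) Z.obj)
          (prod.map (𝟙 ((E σ'.left).obj Z.obj)) (J.map m.left) ≫
            (adjE σ'.left).counit.app Z.obj) := by
  intro σ σ' m
  rw [wgRhoT, wgRhoT, wgPi_compat J T E adjE hS Y.obj Z.obj Y.2 Z.2 σ σ' m]
  simp only [Category.assoc]

/-- The morphism to the internal hom associated with a map out of the product. -/
noncomputable def wgToFun (Y X Z : ObjectProperty.FullSubcategory (WGen T)) (g : Y ⊗ X ⟶ Z) :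
    X ⟶ wgIhomObj J T E adjE hS Y Z :=
  ObjectProperty.homMk (show X.obj ⟶ (T : C ⥤ C).obj (wgM J T E adjE hS Y.obj Z.obj Y.2 Z.2) from
    wgLift T hidem X.2
      ((wgM_univ J T E adjE hS Y.obj Z.obj Y.2 Z.2 X.obj (wgRho J T E adjE hVY Y X Z g)
        (wgRho_compat J T E adjE hVY Y X Z g)).choose))

theorem wgToFun_spec (Y X Z : ObjectProperty.FullSubcategory (WGen T)) (g : Y ⊗ X ⟶ Z)
    (σ : CostructuredArrow J Y.obj) :
    wgRhoT J T E adjE hS Y X Z (wgToFun J T hidem E adjE hVY hS Y X Z g) σ =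
      wgRho J T E adjE hVY Y X Z g σ := by
  rw [wgRhoT, ← Category.assoc]
  rw [show (wgToFun J T hidem E adjE hVY hS Y X Z g).hom ≫ T.ε.app _ =
    (wgM_univ J T E adjE hS Y.obj Z.obj Y.2 Z.2 X.obj (wgRho J T E adjE hVY Y X Z g)
        (wgRho_compat J T E adjE hVY Y X Z g)).choose from wgLift_eps T hidem X.2 _]
  exact (wgM_univ J T E adjE hS Y.obj Z.obj Y.2 Z.2 X.obj (wgRho J T E adjE hVY Y X Z g)
    (wgRho_compat J T E adjE hVY Y X Z g)).choose_spec.1 σ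

theorem wgToFun_uniq (Y X Z : ObjectProperty.FullSubcategory (WGen T)) (g : Y ⊗ X ⟶ Z)
    (t : X ⟶ wgIhomObj J T E adjE hS Y Z)
    (ht : ∀ σ, wgRhoT J T E adjE hS Y X Z t σ = wgRho J T E adjE hVY Y X Z g σ) :
    t = wgToFun J T hidem E adjE hVY hS Y X Z g := by
  apply ObjectProperty.hom_ext
  apply wg_hom_ext T hidem X.2 (g := t.hom)
  rw [show (wgToFun J T hidem E adjE hVY hS Y X Z g).hom ≫ T.ε.app _ =
    (wgM_univ J T E adjE hS Y.obj Z.obj Y.2 Z.2 X.obj (wgRho J T E adjE hVY Y X Z g)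
        (wgRho_compat J T E adjE hVY Y X Z g)).choose from wgLift_eps T hidem X.2 _]
  exact (wgM_univ J T E adjE hS Y.obj Z.obj Y.2 Z.2 X.obj (wgRho J T E adjE hVY Y X Z g)
    (wgRho_compat J T E adjE hVY Y X Z g)).choose_spec.2 _
    (fun σ => by rw [Category.assoc]; exact ht σ)

include hθ in
/-- The universal property of the product cone, specialised. -/
theorem wgTheta_exists (Y X Z : ObjectProperty.FullSubcategory (WGen T))
    (c : ∀ σ : CostructuredArrow J Y.obj, (J.obj σ.left ⨯ X.obj) ⟶ Z.obj)
    (hc : ∀ (σ σ' : CostructuredArrow J Y.obj) (m : σ ⟶ σ'),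
      prod.map (J.map m.left) (𝟙 X.obj) ≫ c σ' = c σ) :
    ∃! h : (Y ⊗ X).obj ⟶ Z.obj, ∀ σ : CostructuredArrow J Y.obj,
      (ObjectProperty.ι (WGen T)).map (wgl J T hVY Y X σ) ≫ h = c σ :=
  hθ Y.obj X.obj Y.2 X.2 _
    (CartesianMonoidalCategory.tensorProductIsBinaryProduct Y X) Z.obj c hc

/-- The inverse direction: from internal-hom elements to maps out of the product. -/
noncomputable def wgCT (Y X Z : ObjectProperty.FullSubcategory (WGen T))
    (t : X ⟶ wgIhomObj J T E adjE hS Y Z) (σ : CostructuredArrow J Y.obj) :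
    (J.obj σ.left ⨯ X.obj) ⟶ Z.obj :=
  (prod.braiding X.obj (J.obj σ.left)).inv ≫
    ((adjE σ.left).homEquiv X.obj Z.obj).symm (wgRhoT J T E adjE hS Y X Z t σ)

theorem wgCT_rho (Y X Z : ObjectProperty.FullSubcategory (WGen T))
    (t : X ⟶ wgIhomObj J T E adjE hS Y Z) (σ : CostructuredArrow J Y.obj) :
    ((adjE σ.left).homEquiv X.obj Z.obj)
        ((prod.braiding X.obj (J.obj σ.left)).hom ≫ wgCT J T E adjE hS Y X Z t σ) =
      wgRhoT J T E adjE hS Y X Z t σ := by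
  rw [wgCT]
  exact (congrArg ((adjE σ.left).homEquiv X.obj Z.obj)
    (Iso.hom_inv_id_assoc (prod.braiding X.obj (J.obj σ.left)) _)).trans (Equiv.apply_symm_apply _ _)

theorem wgCT_compat (Y X Z : ObjectProperty.FullSubcategory (WGen T))
    (t : X ⟶ wgIhomObj J T E adjE hS Y Z) :
    ∀ (σ σ' : CostructuredArrow J Y.obj) (m : σ ⟶ σ'),
      prod.map (J.map m.left) (𝟙 X.obj) ≫ wgCT J T E adjE hS Y X Z t σ' =
        wgCT J T E adjE hS Y X Z t σ := fun σ σ' m =>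
  (wg_compat_step J E adjE σ σ' m (wgCT J T E adjE hS Y X Z t)).mp (by
    rw [wgCT_rho J T E adjE hS Y X Z t σ, wgCT_rho J T E adjE hS Y X Z t σ']
    exact wgRhoT_compat J T E adjE hS Y X Z t σ σ' m)

noncomputable def wgInvFun (Y X Z : ObjectProperty.FullSubcategory (WGen T))
    (t : X ⟶ wgIhomObj J T E adjE hS Y Z) : Y ⊗ X ⟶ Z :=
  ObjectProperty.homMk
    (wgTheta_exists J T hVY hθ Y X Z (wgCT J T E adjE hS Y X Z t)
      (wgCT_compat J T E adjE hS Y X Z t)).choose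

/-- The hom-set equivalence exhibiting the internal hom. -/
noncomputable def wgEquiv (Y X Z : ObjectProperty.FullSubcategory (WGen T)) :
    (Y ⊗ X ⟶ Z) ≃ (X ⟶ wgIhomObj J T E adjE hS Y Z) where
  toFun := wgToFun J T hidem E adjE hVY hS Y X Z
  invFun := wgInvFun J T E adjE hVY hθ hS Y X Z
  left_inv g := by
    have h1 := (wgTheta_exists J T hVY hθ Y X Z
      (wgCT J T E adjE hS Y X Z (wgToFun J T hidem E adjE hVY hS Y X Z g))
      (wgCT_compat J T E adjE hS Y X Z _)).choose_spec
    apply ObjectProperty.hom_ext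
    refine (h1.2 g.hom fun σ => ?_).symm
    rw [wgCT, wgToFun_spec J T hidem E adjE hVY hS Y X Z g σ, wgRho,
      Equiv.symm_apply_apply]
    exact (Iso.inv_hom_id_assoc (prod.braiding X.obj (J.obj σ.left)) _).symm
  right_inv t := by
    refine (wgToFun_uniq J T hidem E adjE hVY hS Y X Z
      (wgInvFun J T E adjE hVY hθ hS Y X Z t) t fun σ => ?_).symm
    have h1 := (wgTheta_exists J T hVY hθ Y X Z (wgCT J T E adjE hS Y X Z t)
      (wgCT_compat J T E adjE hS Y X Z t)).choose_spec.1 σ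
    rw [← wgCT_rho J T E adjE hS Y X Z t σ, wgRho]
    congr 1
    rw [← h1]
    rfl

theorem wgRhoT_comp (Y : ObjectProperty.FullSubcategory (WGen T)) {X' X Z : ObjectProperty.FullSubcategory (WGen T)}
    (f : X' ⟶ X) (t : X ⟶ wgIhomObj J T E adjE hS Y Z) (σ : CostructuredArrow J Y.obj) :
    wgRhoT J T E adjE hS Y X' Z (f ≫ t) σ =
      (ObjectProperty.ι (WGen T)).map f ≫ wgRhoT J T E adjE hS Y X Z t σ := by
  show ((ObjectProperty.ι (WGen T)).map f ≫
      t.hom) ≫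
      (T.ε.app _ ≫ wgPi J T E adjE hS Y.obj Z.obj Y.2 Z.2 σ) = _
  rw [Category.assoc]
  rfl

theorem wgEquiv_nat (Y : ObjectProperty.FullSubcategory (WGen T)) :
    ∀ (X' X Z : ObjectProperty.FullSubcategory (WGen T)) (f : X' ⟶ X) (g : (tensorLeft Y).obj X ⟶ Z),
      wgEquiv J T hidem E adjE hVY hθ hS Y X' Z ((tensorLeft Y).map f ≫ g) =
        f ≫ wgEquiv J T hidem E adjE hVY hθ hS Y X Z g := by
  intro X' X Z f g
  show wgToFun J T hidem E adjE hVY hS Y X' Z ((tensorLeft Y).map f ≫ g) =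
    f ≫ wgToFun J T hidem E adjE hVY hS Y X Z g
  refine (wgToFun_uniq J T hidem E adjE hVY hS Y X' Z ((tensorLeft Y).map f ≫ g)
    (f ≫ wgToFun J T hidem E adjE hVY hS Y X Z g) fun σ => ?_).symm
  rw [wgRhoT_comp J T E adjE hS Y f _ σ,
    wgToFun_spec J T hidem E adjE hVY hS Y X Z g σ, wgRho, wgRho,
    show (tensorLeft Y).map f = Y ◁ f from rfl,
    wgC_whisker J T hVY Y f g σ]
  have hnat := Adjunction.homEquiv_naturality_left (adjE σ.left)
    ((ObjectProperty.ι (WGen T)).map f)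
    ((prod.braiding X.obj (J.obj σ.left)).hom ≫ wgC J T hVY Y X Z g σ)
  exact hnat.symm.trans (congrArg ((adjE σ.left).homEquiv X'.obj Z.obj) (braid_natural_assoc _ _ _))

/-- Every `W`-generated object is exponentiable in `W_l[C]`. -/
noncomputable def wgClosed (Y : ObjectProperty.FullSubcategory (WGen T)) : Closed Y where
  rightAdj := Adjunction.rightAdjointOfEquiv
    (G_obj := fun Z => wgIhomObj J T E adjE hS Y Z)
    (fun X Z => wgEquiv J T hidem E adjE hVY hθ hS Y X Z)
    (wgEquiv_nat J T hidem E adjE hVY hθ hS Y)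
  adj := Adjunction.adjunctionOfEquivRight _ _

end WgClosed

end

/-- Let `W` be a closeable left Kan extendable full subcategory of a
bicomplete category `C`: the inclusion `J` has a pointwise left Kan extension `(T, η)`
along itself with idempotent density comonad; (1) every object `V` of `W` is
exponentiable in `C`, with chosen exponential functors `Hom(V, -) = E V` right adjoint
to `- ⨯ J V`; (2) products `J V ⨯ J V'` of objects of `W` are `W`-generated (whence
objects of `W` and products `J V ⨯ Y` with `Y` generated are `W`-generated, which we
record as `hVgen` and `hVY`); (3) for all `W`-generated `X, Y` and every product fan
`P` of `X` and `Y` in the subcategory `W_l[C]` of `W`-generated objects, the cone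
`θ : J_X ×_C Y ⇒ X ×_{W_l[C]} Y`, whose component at `σ : J V ⟶ X` is
`σ ×_{W_l[C]} 1_Y`, is a colimiting cone in `C`; (4) for all `W`-generated `Y, Z` the
functor `S^Y_Z : (W/Y)ᵒᵖ ⥤ C`, `σ ↦ Hom(V, Z)`, has a limit in `C`.  Then `W_l[C]` is
cartesian closed, and the internal hom of `Y` and `Z` is obtained by applying a
coreflector `R : C ⥤ W_l[C]` to the limit of `S^Y_Z`. -/
theorem wGenerated_cartesianClosed
    {W : Type u₁} [Category.{v₁} W] {C : Type u₂} [Category.{v₂} C]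
    [HasLimits C] [HasColimits C]
    (J : W ⥤ C) [J.Full] [J.Faithful]
    (T : Comonad C) (η : J ⟶ J ⋙ (T : C ⥤ C))
    (hkan : (Functor.LeftExtension.mk (T : C ⥤ C) η).IsPointwiseLeftKanExtension)
    (hε : ∀ w : W, η.app w ≫ T.ε.app (J.obj w) = 𝟙 (J.obj w))
    (hδ : ∀ w : W, η.app w ≫ T.δ.app (J.obj w) = η.app w ≫ (T : C ⥤ C).map (η.app w))
    (hidem : IsIso T.δ)
    -- (1) chosen exponentials for objects of `W`
    (E : W → C ⥤ C)
    (adjE : ∀ V : W, prod.functor.flip.obj (J.obj V) ⊣ E V)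
    -- (2) and its consequences, needed to formulate (3)
    (hVgen : ∀ V : W, WGen T (J.obj V))
    (hprod : ∀ V V' : W, WGen T (J.obj V ⨯ J.obj V'))
    (hVY : ∀ (V : W) (Y : C), WGen T Y → WGen T (J.obj V ⨯ Y))
    -- (3) the cones `θ` are colimiting
    (hθ : ∀ (X Y : C) (hX : WGen T X) (hY : WGen T Y)
      (P : BinaryFan (⟨X, hX⟩ : ObjectProperty.FullSubcategory (WGen T)) ⟨Y, hY⟩) (hP : IsLimit P)
      (Z₀ : C) (c : ∀ σ : CostructuredArrow J X, (J.obj σ.left ⨯ Y) ⟶ Z₀),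
      (∀ (σ σ' : CostructuredArrow J X) (m : σ ⟶ σ'),
        prod.map (J.map m.left) (𝟙 Y) ≫ c σ' = c σ) →
      ∃! h : P.pt.obj ⟶ Z₀, ∀ σ : CostructuredArrow J X,
        (ObjectProperty.ι (WGen T)).map (hP.lift (BinaryFan.mk
          (show (⟨J.obj σ.left ⨯ Y, hVY σ.left Y hY⟩ : ObjectProperty.FullSubcategory (WGen T)) ⟶
              ⟨X, hX⟩ from ObjectProperty.homMk ((prod.fst : J.obj σ.left ⨯ Y ⟶ J.obj σ.left) ≫ σ.hom : J.obj σ.left ⨯ Y ⟶ X))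
          (show (⟨J.obj σ.left ⨯ Y, hVY σ.left Y hY⟩ : ObjectProperty.FullSubcategory (WGen T)) ⟶
              ⟨Y, hY⟩ from ObjectProperty.homMk (prod.snd : J.obj σ.left ⨯ Y ⟶ Y)))) ≫ h = c σ)
    -- (4) the functors `S^Y_Z` have limits in `C`
    (hS : ∀ (Y Z : C), WGen T Y → WGen T Z →
      ∃ (M : C) (π : ∀ σ : CostructuredArrow J Y, M ⟶ (E σ.left).obj Z),
        (∀ (σ σ' : CostructuredArrow J Y) (m : σ ⟶ σ'),
          π σ = π σ' ≫ ((adjE σ.left).homEquiv ((E σ'.left).obj Z) Z)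
            (prod.map (𝟙 ((E σ'.left).obj Z)) (J.map m.left) ≫
              (adjE σ'.left).counit.app Z)) ∧
        (∀ (N : C) (ρ : ∀ σ : CostructuredArrow J Y, N ⟶ (E σ.left).obj Z),
          (∀ (σ σ' : CostructuredArrow J Y) (m : σ ⟶ σ'),
            ρ σ = ρ σ' ≫ ((adjE σ.left).homEquiv ((E σ'.left).obj Z) Z)
              (prod.map (𝟙 ((E σ'.left).obj Z)) (J.map m.left) ≫
                (adjE σ'.left).counit.app Z)) →
          ∃! h : N ⟶ M, ∀ σ, h ≫ π σ = ρ σ)) :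
    -- conclusion: `W_l[C]` is cartesian closed, with internal hom the coreflection of
    -- the limit of `S^Y_Z`
    ∃ (cfp : CartesianMonoidalCategory (ObjectProperty.FullSubcategory (WGen T))),
      letI := cfp
      ∃ cc : MonoidalClosed (ObjectProperty.FullSubcategory (WGen T)),
        ∀ (Y Z : C) (hY : WGen T Y) (hZ : WGen T Z)
          (R : C ⥤ ObjectProperty.FullSubcategory (WGen T))
          (_ : ObjectProperty.ι (WGen T) ⊣ R)
          (M : C) (π : ∀ σ : CostructuredArrow J Y, M ⟶ (E σ.left).obj Z),
          (∀ (σ σ' : CostructuredArrow J Y) (m : σ ⟶ σ'),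
            π σ = π σ' ≫ ((adjE σ.left).homEquiv ((E σ'.left).obj Z) Z)
              (prod.map (𝟙 ((E σ'.left).obj Z)) (J.map m.left) ≫
                (adjE σ'.left).counit.app Z)) →
          (∀ (N : C) (ρ : ∀ σ : CostructuredArrow J Y, N ⟶ (E σ.left).obj Z),
            (∀ (σ σ' : CostructuredArrow J Y) (m : σ ⟶ σ'),
              ρ σ = ρ σ' ≫ ((adjE σ.left).homEquiv ((E σ'.left).obj Z) Z)
                (prod.map (𝟙 ((E σ'.left).obj Z)) (J.map m.left) ≫
                  (adjE σ'.left).counit.app Z)) →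
            ∃! h : N ⟶ M, ∀ σ, h ≫ π σ = ρ σ) →
          letI : Closed (⟨Y, hY⟩ : ObjectProperty.FullSubcategory (WGen T)) := cc.closed _
          Nonempty ((ihom (⟨Y, hY⟩ : ObjectProperty.FullSubcategory (WGen T))).obj ⟨Z, hZ⟩ ≅ R.obj M) := by
  letI cfpI : CartesianMonoidalCategory (ObjectProperty.FullSubcategory (WGen T)) := wgCFP T hidem
  refine ⟨cfpI, ⟨fun Y => wgClosed J T hidem E adjE hVY hθ hS Y⟩, ?_⟩
  intro Y Z hY hZ R adjR M π hπ huniv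
  -- the two limits of `S^Y_Z` are isomorphic
  obtain ⟨k2, hk2, hk2u⟩ := wgM_univ J T E adjE hS Y Z hY hZ M π hπ
  obtain ⟨k1, hk1, hk1u⟩ := huniv (wgM J T E adjE hS Y Z hY hZ)
    (wgPi J T E adjE hS Y Z hY hZ) (wgPi_compat J T E adjE hS Y Z hY hZ)
  have h12 : k1 ≫ k2 = 𝟙 _ := by
    obtain ⟨l, hl, hlu⟩ := wgM_univ J T E adjE hS Y Z hY hZ (wgM J T E adjE hS Y Z hY hZ)
      (wgPi J T E adjE hS Y Z hY hZ) (wgPi_compat J T E adjE hS Y Z hY hZ)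
    rw [hlu (k1 ≫ k2) (fun σ => by rw [Category.assoc, hk2, hk1]),
      hlu (𝟙 _) (fun σ => by rw [Category.id_comp])]
  have h21 : k2 ≫ k1 = 𝟙 _ := by
    obtain ⟨l, hl, hlu⟩ := huniv M π hπ
    rw [hlu (k2 ≫ k1) (fun σ => by rw [Category.assoc, hk1, hk2]),
      hlu (𝟙 _) (fun σ => by rw [Category.id_comp])]
  -- iso between the two coreflections of `M`
  have e1 := Adjunction.homEquiv_counit adjR (⟨(T : C ⥤ C).obj M, wg_gen_T T M⟩) M
    ((adjR.homEquiv ⟨(T : C ⥤ C).obj M, wg_gen_T T M⟩ M) (T.ε.app M))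
  rw [Equiv.symm_apply_apply] at e1
  simp only [ObjectProperty.ι_map] at e1
  have e2 : wgLift T hidem (R.obj M).2 (adjR.counit.app M) ≫ T.ε.app M =
      adjR.counit.app M := wgLift_eps T hidem (R.obj M).2 (adjR.counit.app M)
  have isoB : (⟨(T : C ⥤ C).obj M, wg_gen_T T M⟩ : ObjectProperty.FullSubcategory (WGen T)) ≅ R.obj M := by
    refine ⟨(adjR.homEquiv ⟨(T : C ⥤ C).obj M, wg_gen_T T M⟩ M) (T.ε.app M),
      ObjectProperty.homMk (wgLift T hidem (R.obj M).2 (adjR.counit.app M)), ?_, ?_⟩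
    · apply ObjectProperty.hom_ext
      apply wg_hom_ext T hidem (wg_gen_T T M)
      rw [ObjectProperty.FullSubcategory.comp_hom, ObjectProperty.FullSubcategory.id_hom,
        ObjectProperty.homMk_hom]
      rw [Category.assoc, e2, ← e1]
      exact (Category.id_comp _).symm
    · apply (adjR.homEquiv (R.obj M) M).symm.injective
      rw [Adjunction.homEquiv_counit, Adjunction.homEquiv_counit, Functor.map_comp,
        CategoryTheory.Functor.map_id, Category.id_comp]
      simp only [ObjectProperty.ι_map, ObjectProperty.homMk_hom]
      rw [Category.assoc, ← e1]
      exact e2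
  have isoA : wgIhomObj J T E adjE hS ⟨Y, hY⟩ ⟨Z, hZ⟩ ≅
      (⟨(T : C ⥤ C).obj M, wg_gen_T T M⟩ : ObjectProperty.FullSubcategory (WGen T)) := by
    refine ⟨ObjectProperty.homMk (show (T : C ⥤ C).obj (wgM J T E adjE hS Y Z hY hZ) ⟶ (T : C ⥤ C).obj M from
        (T : C ⥤ C).map k1),
      ObjectProperty.homMk (show (T : C ⥤ C).obj M ⟶ (T : C ⥤ C).obj (wgM J T E adjE hS Y Z hY hZ) from
        (T : C ⥤ C).map k2), ?_, ?_⟩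
    · apply ObjectProperty.hom_ext
      show (T : C ⥤ C).map k1 ≫ (T : C ⥤ C).map k2 = 𝟙 _
      rw [← Functor.map_comp, h12, CategoryTheory.Functor.map_id]
    · apply ObjectProperty.hom_ext
      show (T : C ⥤ C).map k2 ≫ (T : C ⥤ C).map k1 = 𝟙 _
      rw [← Functor.map_comp, h21, CategoryTheory.Functor.map_id]
  exact ⟨isoA ≪≫ isoB⟩
end

section
/- Let L be a frame which is compact (its top element ⊤ is a compact element: every subset S ⊆ L with ⨆ S = ⊤ has a finite subset with supremum ⊤) and regular. Then L is a continuous frame: every a ∈ L satisfies a = ⨆ {x ∈ L | x ≪ a}. -/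
universe u

/-- The way-below relation in a complete lattice: `x ≪ a` iff for every nonempty
directed subset `D` with `a ≤ ⨆ D` there is `d ∈ D` with `x ≤ d`. -/
def WayBelow {L : Type u} [CompleteLattice L] (x a : L) : Prop :=
  ∀ D : Set L, D.Nonempty → DirectedOn (· ≤ ·) D → a ≤ sSup D → ∃ d ∈ D, x ≤ d

/-- Let `L` be a frame which is compact (every subset with supremum `⊤`
has a finite subset with supremum `⊤`, i.e. `⊤` is a compact element) and regular
(every `a` is the supremum of the `x` rather below `a`, where `x ≺ a` means
`x* ⊔ a = ⊤` with `x*` the pseudocomplement).  Then `L` is a continuous frame: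
every `a ∈ L` satisfies `a = ⨆ {x | x ≪ a}` for the way-below relation `≪`. -/
theorem frame_continuous_of_compact_of_regular
    {L : Type u} [Order.Frame L]
    (hcompact : ∀ S : Set L, sSup S = ⊤ → ∃ F : Finset L, ↑F ⊆ S ∧ sSup (↑F : Set L) = ⊤)
    (hreg : ∀ a : L, a = sSup {x : L | xᶜ ⊔ a = ⊤}) :
    ∀ a : L, a = sSup {x : L | WayBelow x a} := by
  classical
  intro a
  apply le_antisymm
  · conv_lhs => rw [hreg a]
    apply sSup_le_sSup_of_isCofinalFor
    intro x hx
    refine ⟨x, ?_, le_rfl⟩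
    intro D hne hdir hle
    have htop : sSup ({xᶜ} ∪ D) = ⊤ := by
      apply top_unique
      calc ⊤ = xᶜ ⊔ a := hx.symm
        _ ≤ xᶜ ⊔ sSup D := sup_le_sup_left hle _
        _ ≤ sSup ({xᶜ} ∪ D) := by rw [sSup_union, sSup_singleton]
    obtain ⟨F, hFsub, hFtop⟩ := hcompact _ htop
    obtain ⟨d, hdD, hdub⟩ := Finset.sup_le_of_le_directed D hne hdir
      (F.filter (· ∈ D)) (fun b hb => ⟨b, (Finset.mem_filter.mp hb).2, le_rfl⟩)
    refine ⟨d, hdD, ?_⟩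
    have hFle : sSup (↑F : Set L) ≤ xᶜ ⊔ d := by
      apply sSup_le
      intro b hb
      rcases hFsub hb with hb1 | hb2
      · exact le_sup_of_le_left (le_of_eq hb1)
      · refine le_sup_of_le_right (le_trans ?_ hdub)
        exact Finset.le_sup (f := id) (Finset.mem_filter.mpr ⟨hb, hb2⟩)
    rw [hFtop] at hFle
    calc x = x ⊓ (xᶜ ⊔ d) := by rw [top_le_iff.mp hFle, inf_top_eq]
      _ = x ⊓ xᶜ ⊔ x ⊓ d := inf_sup_left x xᶜ d
      _ ≤ ⊥ ⊔ d := sup_le_sup (le_of_eq (inf_compl_self x)) inf_le_right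
      _ = d := bot_sup_eq d
  · apply sSup_le
    intro x hx
    obtain ⟨d, hd, hxd⟩ := hx {a} ⟨a, rfl⟩ (directedOn_singleton a) (by simp)
    simpa [Set.mem_singleton_iff.mp hd] using hxd
end

section
/- Let X be a locally compact Hausdorff topological space. Let K(X) be the poset of compact subsets of X ordered by inclusion, regarded as a category, and let φ : K(X) ⥤ Top be the functor sending a compact subset K to K with the subspace topology and each inclusion K ⊆ K′ to the corresponding continuous inclusion map. Then the cocone on φ with apex X whose components are the inclusion maps K → X is a colimit cocone in the category of topological spaces. -/
open CategoryTheory CategoryTheory.Limits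

universe u

/-- The poset of compact subsets of `X`, regarded as a category, mapped into `TopCat` by
sending a compact subset to the corresponding subspace and an inclusion of compact
subsets to the inclusion map. -/
def compactSubsetsDiagram (X : Type u) [TopologicalSpace X] :
    {K : Set X // IsCompact K} ⥤ TopCat.{u} where
  obj K := TopCat.of K.1
  map {K K'} f :=
    TopCat.ofHom (ContinuousMap.mk (Set.inclusion (leOfHom f)) (continuous_inclusion (leOfHom f)))
  map_id _ := rfl
  map_comp _ _ := rfl

/-- The cocone on the diagram of compact subsets of `X` whose apex is `X` and whose
components are the inclusion maps `K → X`. -/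
def compactSubsetsCocone (X : Type u) [TopologicalSpace X] :
    Cocone (compactSubsetsDiagram X) where
  pt := TopCat.of X
  ι :=
    { app := fun K => TopCat.ofHom (ContinuousMap.mk (Subtype.val) continuous_subtype_val)
      naturality := fun _ _ _ => rfl }

/-- Let `X` be a locally compact Hausdorff topological space.  Then
the cocone on the diagram of compact subsets of `X` (with the subspace topologies and
inclusion maps) whose apex is `X` and whose components are the inclusions `K → X` is a
colimit cocone in the category of topological spaces. -/
theorem isColimit_compactSubsetsCocone
    (X : Type u) [TopologicalSpace X] [LocallyCompactSpace X] [T2Space X] :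
    Nonempty (IsColimit (compactSubsetsCocone X)) := by
  constructor
  have key : ∀ (s : Cocone (compactSubsetsDiagram X)) (K : {K : Set X // IsCompact K})
      (x : X) (hx : x ∈ K.1),
      s.ι.app K (⟨x, hx⟩ : K.1) = s.ι.app ⟨{x}, isCompact_singleton⟩ (⟨x, rfl⟩ : ({x} : Set X)) := by
    intro s K x hx
    have h : (⟨{x}, isCompact_singleton⟩ : {K : Set X // IsCompact K}) ⟶ K :=
      homOfLE (show ({x} : Set X) ≤ K.1 from Set.singleton_subset_iff.mpr hx)
    have := s.ι.naturality h
    have := ConcreteCategory.congr_hom this (⟨x, rfl⟩ : ({x} : Set X))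
    exact this
  refine
    { desc := fun s => TopCat.ofHom <| ContinuousMap.mk
        (fun x => s.ι.app ⟨{x}, isCompact_singleton⟩ (⟨x, rfl⟩ : ({x} : Set X))) ?_
      fac := fun s K => ?_
      uniq := fun s m hm => ?_ }
  · -- continuity
    have : CompactlyGeneratedSpace ↑(compactSubsetsCocone X).pt :=
      inferInstanceAs (CompactlyGeneratedSpace X)
    apply continuous_from_compactlyGeneratedSpace
    intro K _ _ _ g hg
    have hrg : IsCompact (Set.range g) := isCompact_range hg
    exact ((s.ι.app ⟨Set.range g, hrg⟩).hom.continuous.comp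
      (hg.subtype_mk fun k => Set.mem_range_self k)).congr
      fun k => key s ⟨Set.range g, hrg⟩ (g k) (Set.mem_range_self k)
  · ext x
    exact (key s K x.1 x.2).symm
  · ext x
    have := ConcreteCategory.congr_hom (hm ⟨{x}, isCompact_singleton⟩) (⟨x, rfl⟩ : ({x} : Set X))
    exact this
end
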